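/- Let l ≥ 3 and n = 2^l − 1. Then dil(W_n, XT_l) = l − 1: every bijection from the vertices of the wheel W_n to the vertices of the X-tree XT_l has some edge of W_n whose endpoint images are at distance at least l − 1 in XT_l, and there exists a bijection under which every edge of W_n maps to a pair of vertices at distance at most l − 1 in XT_l. -/

import Mathlib

open SimpleGraph

/-- Wheel graph on `Fin n`: hub `0`, rim cycle `1, …, n-1`. -/
def wheelGraph (n : ℕ) : SimpleGraph (Fin n) where
  Adj x y := x ≠ y ∧ (x.val = 0 ∨ y.val = 0 ∨ y.val = x.val + 1 ∨ x.val = y.val + 1 ∨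
    (x.val = 1 ∧ y.val = n - 1) ∨ (y.val = 1 ∧ x.val = n - 1))
  symm := by constructor; rintro x y ⟨h1, h2⟩; exact ⟨h1.symm, by tauto⟩
  loopless := by constructor; rintro x ⟨h1, -⟩; exact h1 rfl

/-- Adjacency of X-tree labels: binary tree edges plus edges between consecutive
labels on the same level (the level of label `a` is `Nat.log 2 a + 1`). -/
def xtAdjLbl (a b : ℕ) : Prop :=
  (b = 2 * a ∨ b = 2 * a + 1 ∨ a = 2 * b ∨ a = 2 * b + 1) ∨
  (b = a + 1 ∧ Nat.log 2 a = Nat.log 2 b) ∨ (a = b + 1 ∧ Nat.log 2 a = Nat.log 2 b)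

/-- The X-tree `XT_l` on `Fin (2^l - 1)`; vertex `x` has label `x+1`. -/
def xTree (l : ℕ) : SimpleGraph (Fin (2 ^ l - 1)) where
  Adj x y := xtAdjLbl (x.val + 1) (y.val + 1)
  symm := by
    constructor
    rintro x y (h | ⟨h1, h2⟩ | ⟨h1, h2⟩)
    · left; tauto
    · right; right; exact ⟨h1, h2.symm⟩
    · right; left; exact ⟨h1, h2.symm⟩
  loopless := by
    constructor
    rintro x (h | ⟨h1, -⟩ | ⟨h1, -⟩) <;> omega

/-! ### Auxiliary material -/

/-- Helper for the distance potential. -/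
def gpot (r : ℕ) : ℕ :=
  if r = 0 then 0 else
    2 * Nat.log 2 r + (if 3 * 2 ^ Nat.log 2 r ≤ 2 * r + 1 then 1 else 0)

lemma gpot_zero : gpot 0 = 0 := rfl

lemma gpot_eq {r : ℕ} (h : r ≠ 0) :
    gpot r = 2 * Nat.log 2 r + (if 3 * 2 ^ Nat.log 2 r ≤ 2 * r + 1 then 1 else 0) := by
  rw [gpot, if_neg h]

lemma gpot_one : gpot 1 = 1 := by
  rw [gpot_eq one_ne_zero, Nat.log_one_right]
  norm_num

lemma gpot_succ (r : ℕ) : gpot r ≤ gpot (r + 1) ∧ gpot (r + 1) ≤ gpot r + 1 := by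
  rcases Nat.eq_zero_or_pos r with rfl | hr
  · rw [gpot_zero]; rw [show (0:ℕ) + 1 = 1 from rfl, gpot_one]; omega
  · have h1 : 2 ^ Nat.log 2 r ≤ r := Nat.pow_log_le_self 2 hr.ne'
    have h2 : r < 2 ^ (Nat.log 2 r + 1) := Nat.lt_pow_succ_log_self one_lt_two r
    set m := Nat.log 2 r with hm
    have hps : (2:ℕ) ^ (m + 1) = 2 * 2 ^ m := by ring
    have hp1 : 1 ≤ (2:ℕ) ^ m := Nat.one_le_two_pow
    rcases Nat.lt_or_ge (r + 1) (2 ^ (m + 1)) with hb | hb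
    · have hlog : Nat.log 2 (r + 1) = m := Nat.log_eq_of_pow_le_of_lt_pow (by omega) hb
      rw [gpot_eq hr.ne', gpot_eq (by omega), hlog, ← hm]
      split_ifs <;> omega
    · have hr1 : r + 1 = 2 ^ (m + 1) := by omega
      have hlog : Nat.log 2 (r + 1) = m + 1 := by rw [hr1, Nat.log_pow one_lt_two]
      rw [gpot_eq hr.ne', gpot_eq (by omega), hlog, ← hm]
      have hps2 : (2:ℕ) ^ (m + 1 + 1) = 4 * 2 ^ m := by ring
      split_ifs <;> omega

lemma gpot_double {r : ℕ} (hr : 1 ≤ r) :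
    gpot r ≤ gpot (2 * r) ∧ gpot (2 * r) ≤ gpot r + 2 := by
  have h1 : 2 ^ Nat.log 2 r ≤ r := Nat.pow_log_le_self 2 (by omega)
  have h2 : r < 2 ^ (Nat.log 2 r + 1) := Nat.lt_pow_succ_log_self one_lt_two r
  set m := Nat.log 2 r with hm
  have hlog : Nat.log 2 (2 * r) = m + 1 := by
    rw [mul_comm, Nat.log_mul_base one_lt_two (by omega), ← hm]
  have hps : (2:ℕ) ^ (m + 1) = 2 * 2 ^ m := by ring
  have hp1 : 1 ≤ (2:ℕ) ^ m := Nat.one_le_two_pow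
  rw [gpot_eq (by omega), gpot_eq (show (2 * r) ≠ 0 by omega), hlog, ← hm]
  split_ifs <;> omega

lemma gpot_double_succ (r : ℕ) :
    gpot r ≤ gpot (2 * r + 1) ∧ gpot (2 * r + 1) ≤ gpot r + 2 := by
  rcases Nat.eq_zero_or_pos r with rfl | hr
  · rw [gpot_zero, show 2 * 0 + 1 = 1 from rfl, gpot_one]; omega
  · have h1 : 2 ^ Nat.log 2 r ≤ r := Nat.pow_log_le_self 2 (by omega)
    have h2 : r < 2 ^ (Nat.log 2 r + 1) := Nat.lt_pow_succ_log_self one_lt_two r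
    set m := Nat.log 2 r with hm
    have hps : (2:ℕ) ^ (m + 1) = 2 * 2 ^ m := by ring
    have hps2 : (2:ℕ) ^ (m + 1 + 1) = 4 * 2 ^ m := by ring
    have hp1 : 1 ≤ (2:ℕ) ^ m := Nat.one_le_two_pow
    have hlog : Nat.log 2 (2 * r + 1) = m + 1 :=
      Nat.log_eq_of_pow_le_of_lt_pow (by omega) (by omega)
    rw [gpot_eq (by omega), gpot_eq (by omega), hlog, ← hm]
    split_ifs <;> omega

/-- The distance-from-leftmost-leaf potential, on labels. -/
lemma dpot_lbl {l a b : ℕ} (ha1 : 1 ≤ a) (ha2 : a < 2 ^ l) (hb1 : 1 ≤ b) (hb2 : b < 2 ^ l)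
    (h : xtAdjLbl a b) :
    (l - 1 - Nat.log 2 b) + gpot (b - 2 ^ Nat.log 2 b)
      ≤ ((l - 1 - Nat.log 2 a) + gpot (a - 2 ^ Nat.log 2 a)) + 1 := by
  have hma1 : 2 ^ Nat.log 2 a ≤ a := Nat.pow_log_le_self 2 (by omega)
  have hma2 : a < 2 ^ (Nat.log 2 a + 1) := Nat.lt_pow_succ_log_self one_lt_two a
  have hmb1 : 2 ^ Nat.log 2 b ≤ b := Nat.pow_log_le_self 2 (by omega)
  have hmb2 : b < 2 ^ (Nat.log 2 b + 1) := Nat.lt_pow_succ_log_self one_lt_two b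
  have hla : Nat.log 2 a < l := Nat.log_lt_of_lt_pow (by omega) ha2
  have hlb : Nat.log 2 b < l := Nat.log_lt_of_lt_pow (by omega) hb2
  unfold xtAdjLbl at h
  set ma := Nat.log 2 a with hma
  set mb := Nat.log 2 b with hmb
  have hpsa : (2:ℕ) ^ (ma + 1) = 2 * 2 ^ ma := by ring
  have hpsa2 : (2:ℕ) ^ (ma + 1 + 1) = 4 * 2 ^ ma := by ring
  have hpsb : (2:ℕ) ^ (mb + 1) = 2 * 2 ^ mb := by ring
  have hpsb2 : (2:ℕ) ^ (mb + 1 + 1) = 4 * 2 ^ mb := by ring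
  rcases h with (hc | hc | hc | hc) | ⟨hc, hlg⟩ | ⟨hc, hlg⟩
  · -- b = 2 a
    have hmba : mb = ma + 1 := by
      rw [hmb, hc, mul_comm, Nat.log_mul_base one_lt_two (by omega), ← hma]
    have hpow : (2:ℕ) ^ mb = 2 * 2 ^ ma := by rw [hmba]; ring
    have hoff : b - 2 ^ mb = 2 * (a - 2 ^ ma) := by omega
    rw [hoff, hmba]
    rcases Nat.eq_zero_or_pos (a - 2 ^ ma) with hz | hz
    · rw [hz, Nat.mul_zero, gpot_zero]
      omega
    · obtain ⟨g1, g2⟩ := gpot_double hz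
      set A := gpot (a - 2 ^ ma)
      set B := gpot (2 * (a - 2 ^ ma))
      omega
  · -- b = 2 a + 1
    have hmba : mb = ma + 1 := by
      rw [hmb, hc]
      exact Nat.log_eq_of_pow_le_of_lt_pow (by omega) (by omega)
    have hpow : (2:ℕ) ^ mb = 2 * 2 ^ ma := by rw [hmba]; ring
    have hoff : b - 2 ^ mb = 2 * (a - 2 ^ ma) + 1 := by omega
    rw [hoff, hmba]
    obtain ⟨g1, g2⟩ := gpot_double_succ (a - 2 ^ ma)
    set A := gpot (a - 2 ^ ma)
    set B := gpot (2 * (a - 2 ^ ma) + 1)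
    omega
  · -- a = 2 b
    have hmab : ma = mb + 1 := by
      rw [hma, hc, mul_comm, Nat.log_mul_base one_lt_two (by omega), ← hmb]
    have hpow : (2:ℕ) ^ ma = 2 * 2 ^ mb := by rw [hmab]; ring
    have hoff : a - 2 ^ ma = 2 * (b - 2 ^ mb) := by omega
    rw [hoff, hmab]
    rcases Nat.eq_zero_or_pos (b - 2 ^ mb) with hz | hz
    · rw [hz, Nat.mul_zero, gpot_zero]
      omega
    · obtain ⟨g1, g2⟩ := gpot_double hz
      set A := gpot (b - 2 ^ mb)
      set B := gpot (2 * (b - 2 ^ mb))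
      omega
  · -- a = 2 b + 1
    have hmab : ma = mb + 1 := by
      rw [hma, hc]
      exact Nat.log_eq_of_pow_le_of_lt_pow (by omega) (by omega)
    have hpow : (2:ℕ) ^ ma = 2 * 2 ^ mb := by rw [hmab]; ring
    have hoff : a - 2 ^ ma = 2 * (b - 2 ^ mb) + 1 := by omega
    rw [hoff, hmab]
    obtain ⟨g1, g2⟩ := gpot_double_succ (b - 2 ^ mb)
    set A := gpot (b - 2 ^ mb)
    set B := gpot (2 * (b - 2 ^ mb) + 1)
    omega
  · -- b = a + 1, same level
    have hpow : (2:ℕ) ^ mb = 2 ^ ma := by rw [hlg]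
    have hoff : b - 2 ^ mb = (a - 2 ^ ma) + 1 := by omega
    rw [hoff]
    obtain ⟨g1, g2⟩ := gpot_succ (a - 2 ^ ma)
    set A := gpot (a - 2 ^ ma)
    set B := gpot ((a - 2 ^ ma) + 1)
    omega
  · -- a = b + 1, same level
    have hpow : (2:ℕ) ^ mb = 2 ^ ma := by rw [hlg]
    have hoff : a - 2 ^ ma = (b - 2 ^ mb) + 1 := by omega
    rw [hoff] at *
    obtain ⟨g1, g2⟩ := gpot_succ (b - 2 ^ mb)
    set A := gpot (b - 2 ^ mb)
    set B := gpot ((b - 2 ^ mb) + 1)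
    omega

/-- Potential on the vertices of the X-tree. -/
def Dpot (l : ℕ) (x : Fin (2 ^ l - 1)) : ℕ :=
  (l - 1 - Nat.log 2 (x.val + 1)) + gpot ((x.val + 1) - 2 ^ Nat.log 2 (x.val + 1))

lemma dpot_lipschitz {l : ℕ} (x y : Fin (2 ^ l - 1)) (h : (xTree l).Adj x y) :
    Dpot l y ≤ Dpot l x + 1 := by
  have hx := x.isLt
  have hy := y.isLt
  have hp : 1 ≤ (2:ℕ) ^ l := Nat.one_le_two_pow
  exact dpot_lbl (by omega) (by omega) (by omega) (by omega) h

lemma pot_le_of_walk {V : Type*} {G : SimpleGraph V} (φ : V → ℕ)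
    (hφ : ∀ a b, G.Adj a b → φ b ≤ φ a + 1) {u v : V} (p : G.Walk u v) :
    φ v ≤ φ u + p.length := by
  induction p with
  | nil => simp
  | @cons a b c h q ih =>
    have := hφ a b h
    simp only [SimpleGraph.Walk.length_cons]
    omega

lemma pot_le_dist {V : Type*} {G : SimpleGraph V} (φ : V → ℕ)
    (hφ : ∀ a b, G.Adj a b → φ b ≤ φ a + 1) {u v : V} (hr : G.Reachable u v) :
    φ v ≤ φ u + G.dist u v := by
  obtain ⟨p, hp⟩ := hr.exists_walk_length_eq_dist
  have := pot_le_of_walk φ hφ p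
  omega

lemma walk_to_root (l : ℕ) (h0 : 0 < 2 ^ l - 1) :
    ∀ (N : ℕ) (x : Fin (2 ^ l - 1)), x.val < N →
      ∃ p : (xTree l).Walk x ⟨0, h0⟩, p.length ≤ Nat.log 2 (x.val + 1) := by
  intro N
  induction N with
  | zero => intro x hx; omega
  | succ N ih =>
    intro x hx
    rcases Nat.eq_zero_or_pos x.val with hz | hz
    · have hxe : x = ⟨0, h0⟩ := Fin.ext hz
      subst hxe
      exact ⟨SimpleGraph.Walk.nil, by simp⟩
    · have hpar : (x.val + 1) / 2 - 1 < 2 ^ l - 1 := by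
        have := x.isLt; omega
      set y : Fin (2 ^ l - 1) := ⟨(x.val + 1) / 2 - 1, hpar⟩ with hy
      have hyv : y.val + 1 = (x.val + 1) / 2 := by
        simp only [hy]; omega
      have hadj : (xTree l).Adj x y := by
        show xtAdjLbl (x.val + 1) (y.val + 1)
        unfold xtAdjLbl
        rw [hyv]
        left
        omega
      obtain ⟨p, hp⟩ := ih y (by simp only [hy]; omega)
      refine ⟨SimpleGraph.Walk.cons hadj p, ?_⟩
      have hld : Nat.log 2 (y.val + 1) = Nat.log 2 (x.val + 1) - 1 := by
        rw [hyv, Nat.log_div_base]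
      have hlp : 0 < Nat.log 2 (x.val + 1) := Nat.log_pos one_lt_two (by omega)
      simp only [SimpleGraph.Walk.length_cons]
      omega

lemma walk_to_two (l : ℕ) (h1 : 1 < 2 ^ l - 1) :
    ∀ (N : ℕ) (x : Fin (2 ^ l - 1)), x.val < N → 1 ≤ x.val →
      ∃ p : (xTree l).Walk x ⟨1, h1⟩, p.length ≤ Nat.log 2 (x.val + 1) := by
  intro N
  induction N with
  | zero => intro x hx _; omega
  | succ N ih =>
    intro x hx hx1
    by_cases hz : x.val = 1
    · have hxe : x = ⟨1, h1⟩ := Fin.ext hz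
      subst hxe
      exact ⟨SimpleGraph.Walk.nil, by simp⟩
    by_cases h3 : x.val = 2
    · have hadj : (xTree l).Adj x ⟨1, h1⟩ := by
        show xtAdjLbl (x.val + 1) (1 + 1)
        unfold xtAdjLbl
        right; right
        constructor
        · omega
        · rw [h3]
          rw [show (2:ℕ) + 1 = 3 from rfl,
            Nat.log_eq_of_pow_le_of_lt_pow (show 2 ^ 1 ≤ 3 by norm_num) (by norm_num),
            Nat.log_eq_of_pow_le_of_lt_pow (show 2 ^ 1 ≤ 1 + 1 by norm_num) (by norm_num)]
      refine ⟨SimpleGraph.Walk.cons hadj SimpleGraph.Walk.nil, ?_⟩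
      have : Nat.log 2 (x.val + 1) = 1 := by
        rw [h3]
        exact Nat.log_eq_of_pow_le_of_lt_pow (by norm_num) (by norm_num)
      simp [this]
    · -- x.val ≥ 3
      have hpar : (x.val + 1) / 2 - 1 < 2 ^ l - 1 := by
        have := x.isLt; omega
      set y : Fin (2 ^ l - 1) := ⟨(x.val + 1) / 2 - 1, hpar⟩ with hy
      have hyv : y.val + 1 = (x.val + 1) / 2 := by
        simp only [hy]; omega
      have hadj : (xTree l).Adj x y := by
        show xtAdjLbl (x.val + 1) (y.val + 1)
        unfold xtAdjLbl
        rw [hyv]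
        left
        omega
      obtain ⟨p, hp⟩ := ih y (by simp only [hy]; omega) (by simp only [hy]; omega)
      refine ⟨SimpleGraph.Walk.cons hadj p, ?_⟩
      have hld : Nat.log 2 (y.val + 1) = Nat.log 2 (x.val + 1) - 1 := by
        rw [hyv, Nat.log_div_base]
      have hlp : 2 ≤ Nat.log 2 (x.val + 1) :=
        (Nat.le_log_iff_pow_le one_lt_two (by omega)).mpr (by omega)
      simp only [SimpleGraph.Walk.length_cons]
      omega

lemma log_two_pow_sub_one {l : ℕ} (hl : 1 ≤ l) : Nat.log 2 (2 ^ l - 1) = l - 1 := by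
  have h2 : (2:ℕ) ^ (l - 1) * 2 = 2 ^ l := by
    rw [← pow_succ]; congr 1; omega
  have h1 : 1 ≤ (2:ℕ) ^ (l - 1) := Nat.one_le_two_pow
  apply Nat.log_eq_of_pow_le_of_lt_pow
  · omega
  · rw [show l - 1 + 1 = l by omega]; omega

/-! ### The snake map -/

def Fsnake (s : ℕ) : ℕ :=
  if Nat.log 2 s % 2 = 1 then s else 3 * 2 ^ Nat.log 2 s - 1 - s

lemma Fsnake_of_odd {s : ℕ} (h : Nat.log 2 s % 2 = 1) : Fsnake s = s := by
  rw [Fsnake, if_pos h]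

lemma Fsnake_of_even {s : ℕ} (h : ¬ Nat.log 2 s % 2 = 1) :
    Fsnake s = 3 * 2 ^ Nat.log 2 s - 1 - s := by
  rw [Fsnake, if_neg h]

lemma Fsnake_one : Fsnake 1 = 1 := by
  rw [Fsnake_of_even (by rw [Nat.log_one_right]; omega), Nat.log_one_right]
  norm_num

lemma Fsnake_two : Fsnake 2 = 2 := by
  rw [Fsnake_of_odd]
  rw [Nat.log_eq_of_pow_le_of_lt_pow (show 2 ^ 1 ≤ 2 by norm_num) (by norm_num)]

lemma Fsnake_bounds {s : ℕ} (hs : 1 ≤ s) :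
    2 ^ Nat.log 2 s ≤ Fsnake s ∧ Fsnake s < 2 ^ (Nat.log 2 s + 1) := by
  have h1 : 2 ^ Nat.log 2 s ≤ s := Nat.pow_log_le_self 2 (by omega)
  have h2 : s < 2 ^ (Nat.log 2 s + 1) := Nat.lt_pow_succ_log_self one_lt_two s
  have hps : (2:ℕ) ^ (Nat.log 2 s + 1) = 2 * 2 ^ Nat.log 2 s := by ring
  rw [Fsnake]
  split_ifs <;> omega

lemma Fsnake_log {s : ℕ} (hs : 1 ≤ s) : Nat.log 2 (Fsnake s) = Nat.log 2 s :=
  Nat.log_eq_of_pow_le_of_lt_pow (Fsnake_bounds hs).1 (Fsnake_bounds hs).2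

lemma Fsnake_pos {s : ℕ} (hs : 1 ≤ s) : 1 ≤ Fsnake s :=
  le_trans Nat.one_le_two_pow (Fsnake_bounds hs).1

lemma Fsnake_lt {l s : ℕ} (hs : 1 ≤ s) (h2 : s < 2 ^ l) : Fsnake s < 2 ^ l := by
  have hlt : Nat.log 2 s < l := Nat.log_lt_of_lt_pow (by omega) h2
  exact lt_of_lt_of_le (Fsnake_bounds hs).2 (Nat.pow_le_pow_right (by norm_num) (by omega))

lemma Fsnake_invol {s : ℕ} (hs : 1 ≤ s) : Fsnake (Fsnake s) = s := by
  have hlog := Fsnake_log hs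
  have h1 : 2 ^ Nat.log 2 s ≤ s := Nat.pow_log_le_self 2 (by omega)
  have h2 : s < 2 ^ (Nat.log 2 s + 1) := Nat.lt_pow_succ_log_self one_lt_two s
  have hps : (2:ℕ) ^ (Nat.log 2 s + 1) = 2 * 2 ^ Nat.log 2 s := by ring
  by_cases h : Nat.log 2 s % 2 = 1
  · rw [Fsnake_of_odd h, Fsnake_of_odd h]
  · rw [Fsnake_of_even (by rw [hlog]; exact h), hlog, Fsnake_of_even h]
    omega

lemma Fsnake_adj {s : ℕ} (hs : 1 ≤ s) : xtAdjLbl (Fsnake s) (Fsnake (s + 1)) := by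
  have h1 : 2 ^ Nat.log 2 s ≤ s := Nat.pow_log_le_self 2 (by omega)
  have h2 : s < 2 ^ (Nat.log 2 s + 1) := Nat.lt_pow_succ_log_self one_lt_two s
  set m := Nat.log 2 s with hm
  have hps : (2:ℕ) ^ (m + 1) = 2 * 2 ^ m := by ring
  have hp1 : 1 ≤ (2:ℕ) ^ m := Nat.one_le_two_pow
  unfold xtAdjLbl
  rcases Nat.lt_or_ge (s + 1) (2 ^ (m + 1)) with hb | hb
  · -- same level
    have hlog : Nat.log 2 (s + 1) = m := Nat.log_eq_of_pow_le_of_lt_pow (by omega) hb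
    by_cases hpar : m % 2 = 1
    · right; left
      constructor
      · rw [Fsnake_of_odd (s := s) (by rw [← hm]; exact hpar),
          Fsnake_of_odd (s := s + 1) (by rw [hlog]; exact hpar)]
      · rw [Fsnake_log hs, Fsnake_log (by omega), hlog, ← hm]
    · right; right
      constructor
      · rw [Fsnake_of_even (s := s) (by rw [← hm]; exact hpar),
          Fsnake_of_even (s := s + 1) (by rw [hlog]; exact hpar), hlog, ← hm]
        omega
      · rw [Fsnake_log hs, Fsnake_log (by omega), hlog, ← hm]
  · -- level boundary: s + 1 = 2 ^ (m+1)
    have hs1 : s + 1 = 2 ^ (m + 1) := by omega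
    have hlog : Nat.log 2 (s + 1) = m + 1 := by rw [hs1, Nat.log_pow one_lt_two]
    by_cases hpar : m % 2 = 1
    · left; right; left
      rw [Fsnake_of_even (s := s + 1) (by rw [hlog]; omega),
        Fsnake_of_odd (s := s) (by rw [← hm]; exact hpar), hlog]
      have hps2 : (2:ℕ) ^ (m + 1 + 1) = 4 * 2 ^ m := by ring
      omega
    · left; left
      rw [Fsnake_of_odd (s := s + 1) (by rw [hlog]; omega),
        Fsnake_of_even (s := s) (by rw [← hm]; exact hpar), ← hm]
      omega

/-! ### Main theorem -/

theorem dil_wheel_xTree (l n : ℕ) (hl : 3 ≤ l) (hn : n = 2 ^ l - 1) :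
    (∀ f : Fin n ≃ Fin (2 ^ l - 1), ∃ u v : Fin n, (wheelGraph n).Adj u v ∧
      l - 1 ≤ (xTree l).dist (f u) (f v)) ∧
    (∃ f : Fin n ≃ Fin (2 ^ l - 1), ∀ u v : Fin n, (wheelGraph n).Adj u v →
      (xTree l).dist (f u) (f v) ≤ l - 1) := by
  subst hn
  have hbig : (8:ℕ) ≤ 2 ^ l := by
    calc (8:ℕ) = 2 ^ 3 := by norm_num
    _ ≤ 2 ^ l := Nat.pow_le_pow_right (by norm_num) hl
  have h0 : 0 < 2 ^ l - 1 := by omega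
  have h1 : 1 < 2 ^ l - 1 := by omega
  have hpl1 : (2:ℕ) ^ (l - 1) * 2 = 2 ^ l := by rw [← pow_succ]; congr 1; omega
  have hpl2 : (2:ℕ) ^ (l - 2) * 2 = 2 ^ (l - 1) := by rw [← pow_succ]; congr 1; omega
  have hq1 : 1 ≤ (2:ℕ) ^ (l - 1) := Nat.one_le_two_pow
  have hq2 : 1 ≤ (2:ℕ) ^ (l - 2) := Nat.one_le_two_pow
  have hdistroot : ∀ x : Fin (2 ^ l - 1), (xTree l).dist x ⟨0, h0⟩ ≤ l - 1 := by
    intro x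
    obtain ⟨p, hp⟩ := walk_to_root l h0 (2 ^ l) x (by have := x.isLt; omega)
    have hlt : Nat.log 2 (x.val + 1) < l :=
      Nat.log_lt_of_lt_pow (by omega) (by have := x.isLt; omega)
    have := SimpleGraph.dist_le p
    omega
  constructor
  · -- lower bound
    intro f
    set z : Fin (2 ^ l - 1) := ⟨0, h0⟩ with hzdef
    have hL : 2 ^ (l - 1) - 1 < 2 ^ l - 1 := by omega
    set L : Fin (2 ^ l - 1) := ⟨2 ^ (l - 1) - 1, hL⟩ with hLdef
    set R : Fin (2 ^ l - 1) := ⟨2 ^ l - 2, by omega⟩ with hRdef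
    have reach : ∀ x y : Fin (2 ^ l - 1), (xTree l).Reachable x y := by
      intro x y
      obtain ⟨p, -⟩ := walk_to_root l h0 (2 ^ l) x (by have := x.isLt; omega)
      obtain ⟨q, -⟩ := walk_to_root l h0 (2 ^ l) y (by have := y.isLt; omega)
      exact (p.reachable).trans (q.reachable).symm
    have hlip : ∀ a b : Fin (2 ^ l - 1), (xTree l).Adj a b → Dpot l b ≤ Dpot l a + 1 :=
      fun a b hab => dpot_lipschitz a b hab
    have hDL : Dpot l L = 0 := by
      have e1 : L.val + 1 = 2 ^ (l - 1) := by simp only [hLdef]; omega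
      unfold Dpot
      rw [e1, Nat.log_pow one_lt_two]
      simp [Nat.sub_self, gpot_zero]
    have hDR : Dpot l R = 2 * l - 3 := by
      have e1 : R.val + 1 = 2 ^ l - 1 := by simp only [hRdef]; omega
      have hlog : Nat.log 2 (2 ^ l - 1) = l - 1 := log_two_pow_sub_one (by omega)
      have hoff : 2 ^ l - 1 - 2 ^ (l - 1) = 2 ^ (l - 1) - 1 := by omega
      have hlog2 : Nat.log 2 (2 ^ (l - 1) - 1) = l - 2 := by
        apply Nat.log_eq_of_pow_le_of_lt_pow
        · omega
        · rw [show l - 2 + 1 = l - 1 by omega]; omega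
      unfold Dpot
      rw [e1, hlog, hoff, gpot_eq (by omega), hlog2]
      rw [if_pos (by omega)]
      omega
    have k1 : Dpot l (f z) ≤ Dpot l L + (xTree l).dist L (f z) :=
      pot_le_dist (Dpot l) hlip (reach L (f z))
    have k2 : Dpot l R ≤ Dpot l (f z) + (xTree l).dist (f z) R :=
      pot_le_dist (Dpot l) hlip (reach (f z) R)
    by_cases hc : l - 1 ≤ (xTree l).dist (f z) R
    · refine ⟨z, f.symm R, ⟨?_, Or.inl rfl⟩, ?_⟩
      · intro heq
        have hfz : f z = R := by rw [heq, Equiv.apply_symm_apply]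
        rw [hfz, SimpleGraph.dist_self] at hc
        omega
      · rw [Equiv.apply_symm_apply]
        exact hc
    · have hc2 : l - 1 ≤ (xTree l).dist L (f z) := by omega
      refine ⟨z, f.symm L, ⟨?_, Or.inl rfl⟩, ?_⟩
      · intro heq
        have hfz : f z = L := by rw [heq, Equiv.apply_symm_apply]
        rw [hfz, SimpleGraph.dist_self] at hc2
        omega
      · rw [Equiv.apply_symm_apply, SimpleGraph.dist_comm]
        exact hc2
  · -- upper bound
    have hFlt : ∀ x : Fin (2 ^ l - 1), Fsnake (x.val + 1) - 1 < 2 ^ l - 1 := by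
      intro x
      have hlt : Fsnake (x.val + 1) < 2 ^ l := Fsnake_lt (by omega) (by have := x.isLt; omega)
      have hpos : 1 ≤ Fsnake (x.val + 1) := Fsnake_pos (by omega)
      omega
    set φf : Fin (2 ^ l - 1) → Fin (2 ^ l - 1) :=
      fun x => ⟨Fsnake (x.val + 1) - 1, hFlt x⟩ with hφf
    have hlbl : ∀ x : Fin (2 ^ l - 1), (φf x).val + 1 = Fsnake (x.val + 1) := by
      intro x
      have hpos : 1 ≤ Fsnake (x.val + 1) := Fsnake_pos (by omega)
      simp only [hφf]
      omega
    have hinv : Function.Involutive φf := by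
      intro x
      apply Fin.ext
      have e1 : (φf (φf x)).val + 1 = Fsnake ((φf x).val + 1) := hlbl (φf x)
      rw [hlbl x] at e1
      rw [Fsnake_invol (by omega)] at e1
      omega
    refine ⟨⟨φf, φf, hinv, hinv⟩, ?_⟩
    intro u v hadj
    obtain ⟨hne, hcase⟩ := hadj
    show (xTree l).dist (φf u) (φf v) ≤ l - 1
    have hdisttwo : ∀ x : Fin (2 ^ l - 1), 1 ≤ x.val → (xTree l).dist x ⟨1, h1⟩ ≤ l - 1 := by
      intro x hx1
      obtain ⟨p, hp⟩ := walk_to_two l h1 (2 ^ l) x (by have := x.isLt; omega) hx1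
      have hlt : Nat.log 2 (x.val + 1) < l :=
        Nat.log_lt_of_lt_pow (by omega) (by have := x.isLt; omega)
      have := SimpleGraph.dist_le p
      omega
    have hub : ∀ x : Fin (2 ^ l - 1), x.val = 0 → φf x = ⟨0, h0⟩ := by
      intro x hx
      apply Fin.ext
      have := hlbl x
      rw [hx] at this
      rw [show (0:ℕ) + 1 = 1 from rfl, Fsnake_one] at this
      simp only [hφf] at this ⊢
      omega
    have hsnake : ∀ x y : Fin (2 ^ l - 1), y.val = x.val + 1 →
        (xTree l).Adj (φf x) (φf y) := by
      intro x y hxy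
      show xtAdjLbl ((φf x).val + 1) ((φf y).val + 1)
      rw [hlbl x, hlbl y, hxy]
      exact Fsnake_adj (by omega)
    have hone : ∀ x y : Fin (2 ^ l - 1), x.val = 1 → y.val = 2 ^ l - 1 - 1 →
        (xTree l).dist (φf x) (φf y) ≤ l - 1 := by
      intro x y hx hyv
      have hfx : φf x = ⟨1, h1⟩ := by
        apply Fin.ext
        have := hlbl x
        rw [hx, show (1:ℕ) + 1 = 2 from rfl, Fsnake_two] at this
        simp only [hφf] at this ⊢
        omega
      have hyval : (φf y).val + 1 = Fsnake (2 ^ l - 1) := by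
        rw [hlbl y, hyv]
        congr 1
        omega
      have hgey : 2 ^ (l - 1) ≤ Fsnake (2 ^ l - 1) := by
        have := (Fsnake_bounds (s := 2 ^ l - 1) (by omega)).1
        rwa [log_two_pow_sub_one (by omega)] at this
      rw [hfx, SimpleGraph.dist_comm]
      exact hdisttwo (φf y) (by omega)
    rcases hcase with hu0 | hv0 | hsucc | hsucc | ⟨hu1, hv1⟩ | ⟨hv1, hu1⟩
    · rw [hub u hu0, SimpleGraph.dist_comm]
      exact hdistroot (φf v)
    · rw [hub v hv0]
      exact hdistroot (φf u)
    · have := SimpleGraph.dist_le (SimpleGraph.Walk.cons (hsnake u v hsucc) SimpleGraph.Walk.nil)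
      simp only [SimpleGraph.Walk.length_cons, SimpleGraph.Walk.length_nil] at this
      omega
    · have := SimpleGraph.dist_le (SimpleGraph.Walk.cons (hsnake v u hsucc) SimpleGraph.Walk.nil)
      simp only [SimpleGraph.Walk.length_cons, SimpleGraph.Walk.length_nil] at this
      rw [SimpleGraph.dist_comm]
      omega
    · exact hone u v hu1 hv1
    · rw [SimpleGraph.dist_comm]
      exact hone v u hv1 hu1
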